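/- Let p be a prime and let n ≥ 1 be a natural number with base-p expansion n = a_1 p^{n_1} + a_2 p^{n_2} + ... + a_k p^{n_k}, where 0 ≤ n_1 < n_2 < ... < n_k and 1 ≤ a_j ≤ p−1 for all j. Then the number of integers x with 0 ≤ x ≤ n−1 such that p does not divide the binomial coefficient C(n−1, x) equals a_1 · p^{n_1} · ∏_{j=2}^{k} (a_j + 1). -/

import Mathlib

open Finset

/-- The number of `x ≤ m` with `p ∤ C(m, x)`. -/
def cnt (p m : ℕ) : ℕ :=
  ((Finset.range (m + 1)).filter fun x => ¬ p ∣ Nat.choose m x).card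

lemma cnt_zero (p : ℕ) (hp : p.Prime) : cnt p 0 = 1 := by
  unfold cnt
  rw [Finset.range_one]
  have h : ¬ p ∣ Nat.choose 0 0 := by
    simp only [Nat.choose_self, Nat.dvd_one]
    exact hp.ne_one
  simp [Finset.filter_singleton, h, hp.ne_one]

lemma not_dvd_choose_small {p r z : ℕ} (hp : p.Prime) (hr : r < p) (hz : z ≤ r) :
    ¬ p ∣ Nat.choose r z := by
  intro hdvd
  have h1 : Nat.choose r z ∣ r.factorial := by
    have := Nat.choose_mul_factorial_mul_factorial hz
    exact ⟨z.factorial * (r - z).factorial, by rw [← this]; ring⟩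
  have h2 : p ∣ r.factorial := hdvd.trans h1
  have := (Nat.Prime.dvd_factorial hp).mp h2
  omega

lemma dvd_choose_iff {p m x : ℕ} (hp : p.Prime) :
    p ∣ Nat.choose m x ↔ p ∣ Nat.choose (m % p) (x % p) * Nat.choose (m / p) (x / p) := by
  haveI : Fact p.Prime := ⟨hp⟩
  have h := Choose.choose_modEq_choose_mod_mul_choose_div_nat (n := m) (k := x) (p := p)
  unfold Nat.ModEq at h
  rw [Nat.dvd_iff_mod_eq_zero, Nat.dvd_iff_mod_eq_zero, h]

lemma cnt_rec (p : ℕ) (hp : p.Prime) (m : ℕ) :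
    cnt p m = (m % p + 1) * cnt p (m / p) := by
  have hp1 : 1 < p := hp.one_lt
  rcases Nat.eq_zero_or_pos m with rfl | hm
  · simp [cnt_zero p hp]
  set q := m / p with hq
  set r := m % p with hr
  have hrp : r < p := Nat.mod_lt _ (by omega)
  have hm' : m = p * q + r := by rw [hq, hr]; exact (Nat.div_add_mod m p).symm
  have key : ((Finset.range (m + 1)).filter fun x => ¬ p ∣ Nat.choose m x).card
      = (((Finset.range (q + 1)).filter fun y => ¬ p ∣ Nat.choose q y) ×ˢ
          Finset.range (r + 1)).card := by
    apply Finset.card_nbij' (fun x => (x / p, x % p)) (fun yz => p * yz.1 + yz.2)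
    · intro x hx
      simp only [Finset.mem_coe, Finset.mem_filter, Finset.mem_range] at hx
      obtain ⟨hx1, hx2⟩ := hx
      rw [dvd_choose_iff hp, hp.dvd_mul, not_or] at hx2
      obtain ⟨hx2, hx3⟩ := hx2
      simp only [Finset.mem_coe, Finset.mem_product, Finset.mem_filter, Finset.mem_range]
      refine ⟨⟨?_, hx3⟩, ?_⟩
      · have := Nat.div_le_div_right (c := p) (show x ≤ m by omega)
        rw [hq]
        exact Nat.lt_succ_of_le this
      · by_contra hgt
        push_neg at hgt
        apply hx2
        rw [← hr, Nat.choose_eq_zero_of_lt (by omega)]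
        exact dvd_zero p
    · intro yz hyz
      simp only [Finset.mem_coe, Finset.mem_product, Finset.mem_filter, Finset.mem_range] at hyz
      obtain ⟨⟨hy1, hy2⟩, hz⟩ := hyz
      have hz2 : yz.2 < p := by omega
      have hdiv : (p * yz.1 + yz.2) / p = yz.1 := by
        rw [Nat.mul_add_div (by omega : 0 < p), Nat.div_eq_of_lt hz2, Nat.add_zero]
      have hmod : (p * yz.1 + yz.2) % p = yz.2 := by
        rw [Nat.mul_add_mod, Nat.mod_eq_of_lt hz2]
      simp only [Finset.mem_coe, Finset.mem_filter, Finset.mem_range]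
      constructor
      · apply Nat.lt_succ_of_le
        rw [hm']
        exact Nat.add_le_add (Nat.mul_le_mul_left p (by omega)) (by omega)
      · rw [dvd_choose_iff hp, hp.dvd_mul, not_or, hdiv, hmod, ← hr, ← hq]
        exact ⟨not_dvd_choose_small hp hrp (by omega), hy2⟩
    · intro x _
      show p * (x / p) + x % p = x
      exact Nat.div_add_mod x p
    · intro yz hyz
      simp only [Finset.mem_coe, Finset.mem_product, Finset.mem_filter, Finset.mem_range] at hyz
      have hz2 : yz.2 < p := by omega
      have hdiv : (p * yz.1 + yz.2) / p = yz.1 := by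
        rw [Nat.mul_add_div (by omega : 0 < p), Nat.div_eq_of_lt hz2, Nat.add_zero]
      have hmod : (p * yz.1 + yz.2) % p = yz.2 := by
        rw [Nat.mul_add_mod, Nat.mod_eq_of_lt hz2]
      simp [hdiv, hmod]
  unfold cnt
  rw [key, Finset.card_product, Finset.card_range]
  ring

/-- product formula for `cnt` of a number given by its base-`p` expansion -/
lemma cnt_expansion (p : ℕ) (hp : p.Prime) :
    ∀ n k (e a : ℕ → ℕ), (∀ i j, i < j → j < k → e i < e j) →
      (∀ j, j < k → 1 ≤ a j) → (∀ j, j < k → a j ≤ p - 1) →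
      n = ∑ j ∈ Finset.range k, a j * p ^ e j →
      cnt p n = ∏ j ∈ Finset.range k, (a j + 1) := by
  intro n
  induction n using Nat.strong_induction_on with
  | _ n IH =>
    intro k e a hmono ha1 ha2 hn
    have hp1 : 1 < p := hp.one_lt
    match k with
    | 0 =>
      simp only [Finset.range_zero, Finset.sum_empty] at hn
      simp [hn, cnt_zero p hp]
    | k' + 1 =>
      have h0 : 0 < a 0 * p ^ e 0 :=
        Nat.mul_pos (ha1 0 (by omega)) (pow_pos (by omega : 0 < p) _)
      have hnpos : 0 < n := by
        rw [hn, Finset.sum_range_succ']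
        omega
      rcases Nat.eq_zero_or_pos (e 0) with he0 | he0
      · -- e 0 = 0
        set R := ∑ j ∈ Finset.range k', a (j + 1) * p ^ (e (j + 1) - 1) with hR
        have hsum : n = a 0 + p * R := by
          rw [hn, Finset.sum_range_succ', he0, pow_zero, mul_one, hR, Finset.mul_sum,
            add_comm]
          congr 1
          apply Finset.sum_congr rfl
          intro j hj
          have h1 : 1 ≤ e (j + 1) := by
            have := hmono 0 (j + 1) (by omega) (by simp at hj; omega)
            omega
          have hpp : p ^ e (j + 1) = p * p ^ (e (j + 1) - 1) := by
            rw [← pow_succ']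
            congr 1
            omega
          rw [hpp]
          ring
        have ha0p : a 0 < p := by
          have := ha2 0 (by omega)
          omega
        have hmod : n % p = a 0 := by
          rw [hsum, Nat.add_mul_mod_self_left, Nat.mod_eq_of_lt ha0p]
        have hdiv : n / p = R := by
          rw [hsum, Nat.add_mul_div_left _ _ (by omega : 0 < p), Nat.div_eq_of_lt ha0p,
            zero_add]
        have hRlt : R < n := by
          rw [← hdiv]
          exact Nat.div_lt_self hnpos hp1
        rw [cnt_rec p hp n, hmod, hdiv,
          IH R hRlt k' (fun i => e (i + 1) - 1) (fun i => a (i + 1))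
            (by intro i j hij hj
                have h1 := hmono (i + 1) (j + 1) (by omega) (by omega)
                have h2 := hmono 0 (i + 1) (by omega) (by omega)
                omega)
            (fun j hj => ha1 (j + 1) (by omega))
            (fun j hj => ha2 (j + 1) (by omega)) hR,
          Finset.prod_range_succ']
        ring
      · -- e 0 > 0
        set R := ∑ j ∈ Finset.range (k' + 1), a j * p ^ (e j - 1) with hR
        have hek : ∀ j, j < k' + 1 → 1 ≤ e j := by
          intro j hj
          rcases Nat.eq_zero_or_pos j with rfl | hjpos
          · omega
          · have := hmono 0 j hjpos hj
            omega
        have hsum : n = p * R := by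
          rw [hn, hR, Finset.mul_sum]
          apply Finset.sum_congr rfl
          intro j hj
          simp only [Finset.mem_range] at hj
          have hpp : p ^ e j = p * p ^ (e j - 1) := by
            rw [← pow_succ']
            congr 1
            have := hek j hj
            omega
          rw [hpp]
          ring
        have hmod : n % p = 0 := by
          rw [hsum]
          simp
        have hdiv : n / p = R := by
          rw [hsum]
          exact Nat.mul_div_cancel_left R (by omega)
        have hRlt : R < n := by
          rw [← hdiv]
          exact Nat.div_lt_self hnpos hp1
        rw [cnt_rec p hp n, hmod, hdiv,
          IH R hRlt (k' + 1) (fun j => e j - 1) a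
            (by intro i j hij hj
                have h1 := hmono i j hij hj
                have h2 := hek i (by omega)
                omega)
            ha1 ha2 hR]
        ring

/-- the main counting lemma for `n - 1` -/
lemma cnt_pred (p : ℕ) (hp : p.Prime) :
    ∀ n k (e a : ℕ → ℕ), 0 < k → (∀ i j, i < j → j < k → e i < e j) →
      (∀ j, j < k → 1 ≤ a j) → (∀ j, j < k → a j ≤ p - 1) →
      n = ∑ j ∈ Finset.range k, a j * p ^ e j →
      cnt p (n - 1) = a 0 * p ^ e 0 * ∏ j ∈ Finset.range (k - 1), (a (j + 1) + 1) := by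
  intro n
  induction n using Nat.strong_induction_on with
  | _ n IH =>
    intro k e a hk hmono ha1 ha2 hn
    have hp1 : 1 < p := hp.one_lt
    obtain ⟨k', rfl⟩ : ∃ k', k = k' + 1 := ⟨k - 1, by omega⟩
    have h0 : 0 < a 0 * p ^ e 0 :=
      Nat.mul_pos (ha1 0 (by omega)) (pow_pos (by omega : 0 < p) _)
    have hnpos : 0 < n := by
      rw [hn, Finset.sum_range_succ']
      omega
    rcases Nat.eq_zero_or_pos (e 0) with he0 | he0
    · -- e 0 = 0
      set R := ∑ j ∈ Finset.range k', a (j + 1) * p ^ (e (j + 1) - 1) with hR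
      have hsum : n = a 0 + p * R := by
        rw [hn, Finset.sum_range_succ', he0, pow_zero, mul_one, hR, Finset.mul_sum,
          add_comm]
        congr 1
        apply Finset.sum_congr rfl
        intro j hj
        have h1 : 1 ≤ e (j + 1) := by
          have := hmono 0 (j + 1) (by omega) (by simp at hj; omega)
          omega
        have hpp : p ^ e (j + 1) = p * p ^ (e (j + 1) - 1) := by
          rw [← pow_succ']
          congr 1
          omega
        rw [hpp]
        ring
      have ha0p : a 0 < p := by
        have := ha2 0 (by omega)
        omega
      have ha01 : 1 ≤ a 0 := ha1 0 (by omega)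
      have hsum' : n - 1 = (a 0 - 1) + p * R := by omega
      have hmod : (n - 1) % p = a 0 - 1 := by
        rw [hsum', Nat.add_mul_mod_self_left, Nat.mod_eq_of_lt (by omega)]
      have hdiv : (n - 1) / p = R := by
        rw [hsum', Nat.add_mul_div_left _ _ (by omega : 0 < p),
          Nat.div_eq_of_lt (by omega), zero_add]
      have hcR : cnt p R = ∏ j ∈ Finset.range k', (a (j + 1) + 1) := by
        apply cnt_expansion p hp R k' (fun i => e (i + 1) - 1) (fun i => a (i + 1))
        · intro i j hij hj
          have h1 := hmono (i + 1) (j + 1) (by omega) (by omega)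
          have h2 := hmono 0 (i + 1) (by omega) (by omega)
          omega
        · exact fun j hj => ha1 (j + 1) (by omega)
        · exact fun j hj => ha2 (j + 1) (by omega)
        · exact hR
      rw [cnt_rec p hp (n - 1), hmod, hdiv, hcR, he0, pow_zero]
      have : a 0 - 1 + 1 = a 0 := by omega
      rw [this]
      simp
    · -- e 0 > 0
      set R := ∑ j ∈ Finset.range (k' + 1), a j * p ^ (e j - 1) with hR
      have hek : ∀ j, j < k' + 1 → 1 ≤ e j := by
        intro j hj
        rcases Nat.eq_zero_or_pos j with rfl | hjpos
        · omega
        · have := hmono 0 j hjpos hj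
          omega
      have hsum : n = p * R := by
        rw [hn, hR, Finset.mul_sum]
        apply Finset.sum_congr rfl
        intro j hj
        simp only [Finset.mem_range] at hj
        have hpp : p ^ e j = p * p ^ (e j - 1) := by
          rw [← pow_succ']
          congr 1
          have := hek j hj
          omega
        rw [hpp]
        ring
      have hRpos : 0 < R := by
        rw [hR, Finset.sum_range_succ']
        have : 0 < a 0 * p ^ (e 0 - 1) :=
          Nat.mul_pos (ha1 0 (by omega)) (pow_pos (by omega : 0 < p) _)
        omega
      have hx : p * (R - 1) + p = p * R := by
        rw [← Nat.mul_succ]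
        congr 1
        omega
      have hsum' : n - 1 = (p - 1) + p * (R - 1) := by omega
      have hmod : (n - 1) % p = p - 1 := by
        rw [hsum', Nat.add_mul_mod_self_left, Nat.mod_eq_of_lt (by omega)]
      have hdiv : (n - 1) / p = R - 1 := by
        rw [hsum', Nat.add_mul_div_left _ _ (by omega : 0 < p),
          Nat.div_eq_of_lt (by omega), zero_add]
      have hRlt : R < n := by
        have h2 : 2 * R ≤ p * R := Nat.mul_le_mul_right R (by omega)
        omega
      have hcR : cnt p (R - 1)
          = a 0 * p ^ (e 0 - 1) * ∏ j ∈ Finset.range (k' + 1 - 1), (a (j + 1) + 1) := by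
        apply IH R hRlt (k' + 1) (fun j => e j - 1) a (by omega)
        · intro i j hij hj
          have h1 := hmono i j hij hj
          have h2 := hek i (by omega)
          omega
        · exact ha1
        · exact ha2
        · exact hR
      rw [cnt_rec p hp (n - 1), hmod, hdiv, hcR]
      have hp0 : p - 1 + 1 = p := by omega
      have hpe : p * p ^ (e 0 - 1) = p ^ e 0 := by
        rw [← pow_succ']
        congr 1
        omega
      rw [hp0]
      simp only [Nat.add_sub_cancel]
      calc p * (a 0 * p ^ (e 0 - 1) * ∏ j ∈ Finset.range k', (a (j + 1) + 1))
          = a 0 * (p * p ^ (e 0 - 1)) * ∏ j ∈ Finset.range k', (a (j + 1) + 1) := by ring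
        _ = a 0 * p ^ e 0 * ∏ j ∈ Finset.range k', (a (j + 1) + 1) := by rw [hpe]

theorem stmt5 (p : ℕ) (hp : p.Prime) (k : ℕ) (hk : 0 < k)
    (e : Fin k → ℕ) (he : StrictMono e)
    (a : Fin k → ℕ) (ha1 : ∀ j, 1 ≤ a j) (ha2 : ∀ j, a j ≤ p - 1)
    (n : ℕ) (hn : n = ∑ j : Fin k, a j * p ^ e j) :
    ((Finset.range n).filter fun x => ¬ p ∣ Nat.choose (n - 1) x).card
      = a ⟨0, hk⟩ * p ^ e ⟨0, hk⟩ *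
        ∏ j ∈ Finset.univ.erase (⟨0, hk⟩ : Fin k), (a j + 1) := by
  have hp1 : 1 < p := hp.one_lt
  -- ℕ-indexed versions
  set eN : ℕ → ℕ := fun i => e ⟨i % k, Nat.mod_lt _ hk⟩ with heN
  set aN : ℕ → ℕ := fun i => a ⟨i % k, Nat.mod_lt _ hk⟩ with haN
  have hfin : ∀ j : Fin k, (⟨(j : ℕ) % k, Nat.mod_lt _ hk⟩ : Fin k) = j := fun j =>
    Fin.ext (Nat.mod_eq_of_lt j.is_lt)
  have hmono : ∀ i j, i < j → j < k → eN i < eN j := by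
    intro i j hij hj
    apply he
    rw [Fin.mk_lt_mk]
    have h1 : i % k = i := Nat.mod_eq_of_lt (by omega)
    have h2 : j % k = j := Nat.mod_eq_of_lt hj
    omega
  have ha1N : ∀ j, j < k → 1 ≤ aN j := fun j _ => ha1 _
  have ha2N : ∀ j, j < k → aN j ≤ p - 1 := fun j _ => ha2 _
  have hnN : n = ∑ j ∈ Finset.range k, aN j * p ^ eN j := by
    rw [hn, ← Fin.sum_univ_eq_sum_range (fun i => aN i * p ^ eN i) k]
    apply Finset.sum_congr rfl
    intro j _
    simp only [heN, haN, hfin]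
  have hnpos : 0 < n := by
    obtain ⟨k', rfl⟩ : ∃ k', k = k' + 1 := ⟨k - 1, by omega⟩
    rw [hnN, Finset.sum_range_succ']
    have : 0 < aN 0 * p ^ eN 0 :=
      Nat.mul_pos (ha1N 0 (by omega)) (pow_pos (by omega : 0 < p) _)
    omega
  have hmain := cnt_pred p hp n k eN aN hk hmono ha1N ha2N hnN
  have hlhs : ((Finset.range n).filter fun x => ¬ p ∣ Nat.choose (n - 1) x).card
      = cnt p (n - 1) := by
    unfold cnt
    rw [show n - 1 + 1 = n by omega]
  have ha0 : aN 0 = a ⟨0, hk⟩ := congrArg a (Fin.ext (Nat.mod_eq_of_lt hk))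
  have he0 : eN 0 = e ⟨0, hk⟩ := congrArg e (Fin.ext (Nat.mod_eq_of_lt hk))
  -- relate the two products
  have hprod : ∏ j ∈ Finset.range (k - 1), (aN (j + 1) + 1)
      = ∏ j ∈ Finset.univ.erase (⟨0, hk⟩ : Fin k), (a j + 1) := by
    apply Nat.eq_of_mul_eq_mul_left (show 0 < a ⟨0, hk⟩ + 1 by omega)
    rw [Finset.mul_prod_erase Finset.univ (fun j => a j + 1)
      (Finset.mem_univ (⟨0, hk⟩ : Fin k))]
    have h1 : ∏ j : Fin k, (a j + 1) = ∏ j ∈ Finset.range k, (aN j + 1) := by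
      rw [← Fin.prod_univ_eq_prod_range (fun i => aN i + 1) k]
      apply Finset.prod_congr rfl
      intro j _
      simp only [haN, hfin]
    rw [h1]
    obtain ⟨k', rfl⟩ : ∃ k', k = k' + 1 := ⟨k - 1, by omega⟩
    rw [Finset.prod_range_succ']
    simp only [Nat.add_sub_cancel]
    rw [← ha0]
    ring
  rw [hlhs, hmain, ha0, he0, hprod]
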